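/- Let X be a zero-dimensional set of reals. Then X satisfies Ufin(O,Ω) if, and only if, for every continuous function Ψ : X → ℕ^ℕ the set maxfin(Ψ[X]) is not a dominating subset of ℕ^ℕ. -/

import Mathlib

open Filter

/-- `f ≤* g`: `f n ≤ g n` for all but finitely many `n`. -/
def EvLE (f g : ℕ → ℕ) : Prop := ∀ᶠ n in atTop, f n ≤ g n

/-- A subset of the Baire space is dominating if every function is
eventually dominated by a member of it. -/
def Dominating (Y : Set (ℕ → ℕ)) : Prop := ∀ g : ℕ → ℕ, ∃ f ∈ Y, EvLE g f

/-- A subset of the Baire space is bounded (w.r.t. `≤*`) if some single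
function eventually dominates all its members. -/
def BoundedStar (Y : Set (ℕ → ℕ)) : Prop := ∃ g : ℕ → ℕ, ∀ f ∈ Y, EvLE f g

/-- `maxfin Y`: pointwise maxima of nonempty finite subsets of `Y`. -/
def maxfin (Y : Set (ℕ → ℕ)) : Set (ℕ → ℕ) :=
  {g | ∃ F : Finset (ℕ → ℕ), F.Nonempty ∧ ↑F ⊆ Y ∧ g = fun n => F.sup (fun f => f n)}

/-- `Y` is `k`-dominating: for each `f` there are `g_1, …, g_k ∈ Y` whose
pointwise maximum eventually dominates `f`. -/
def KDominating (Y : Set (ℕ → ℕ)) (k : ℕ) : Prop :=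
  ∀ f : ℕ → ℕ, ∃ g : Fin k → (ℕ → ℕ), (∀ i, g i ∈ Y) ∧
    ∀ᶠ n in atTop, f n ≤ Finset.univ.sup (fun i => g i n)

/-- An open cover of a topological space. -/
def IsOpenCover {α : Type*} [TopologicalSpace α] (𝒰 : Set (Set α)) : Prop :=
  (∀ u ∈ 𝒰, IsOpen u) ∧ ⋃₀ 𝒰 = Set.univ

/-- An ω-cover: a cover such that every finite subset of the space is
contained in some member. -/
def IsOmegaCover {α : Type*} (𝒱 : Set (Set α)) : Prop :=
  ⋃₀ 𝒱 = Set.univ ∧ ∀ F : Set α, F.Finite → ∃ V ∈ 𝒱, F ⊆ V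

/-- A γ-cover: an infinite cover such that every point belongs to all but
finitely many members. -/
def IsGammaCover {α : Type*} (𝒱 : Set (Set α)) : Prop :=
  ⋃₀ 𝒱 = Set.univ ∧ 𝒱.Infinite ∧ ∀ x : α, {V ∈ 𝒱 | x ∉ V}.Finite

/-- A set of reals is zero-dimensional: its subspace topology has a base of
clopen sets. -/
def ZeroDimensionalSet (X : Set ℝ) : Prop :=
  ∃ B : Set (Set ↥X), TopologicalSpace.IsTopologicalBasis B ∧ ∀ b ∈ B, IsClopen b

/-- The Menger property `Ufin(O,O)`. -/
def MengerProp (α : Type*) [TopologicalSpace α] : Prop :=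
  ∀ 𝒰 : ℕ → Set (Set α), (∀ n, (𝒰 n).Countable ∧ IsOpenCover (𝒰 n)) →
    ∃ ℱ : ℕ → Set (Set α), (∀ n, (ℱ n).Finite ∧ ℱ n ⊆ 𝒰 n) ∧
      (⋃ n, ⋃₀ ℱ n) = Set.univ

/-- The Hurewicz property `Ufin(O,Γ)`. -/
def HurewiczProp (α : Type*) [TopologicalSpace α] : Prop :=
  ∀ 𝒰 : ℕ → Set (Set α), (∀ n, (𝒰 n).Countable ∧ IsOpenCover (𝒰 n)) →
    ∃ ℱ : ℕ → Set (Set α), (∀ n, (ℱ n).Finite ∧ ℱ n ⊆ 𝒰 n) ∧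
      ((∃ n, ⋃₀ ℱ n = Set.univ) ∨ IsGammaCover {s | ∃ n, s = ⋃₀ ℱ n})

/-- The property `Ufin(O,Ω)`. -/
def UfinOOmega (α : Type*) [TopologicalSpace α] : Prop :=
  ∀ 𝒰 : ℕ → Set (Set α), (∀ n, (𝒰 n).Countable ∧ IsOpenCover (𝒰 n)) →
    ∃ ℱ : ℕ → Set (Set α), (∀ n, (ℱ n).Finite ∧ ℱ n ⊆ 𝒰 n) ∧
      ((∃ n, ⋃₀ ℱ n = Set.univ) ∨ IsOmegaCover {s | ∃ n, s = ⋃₀ ℱ n})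

attribute [local instance] Classical.propDecidable

/-- Every finite set lies in infinitely many members of a proper ω-cover. -/
lemma omega_trick {α : Type*} (V : ℕ → Set α)
    (hΩ : IsOmegaCover {s | ∃ n, s = V n}) (hne : ∀ n, V n ≠ Set.univ)
    (F : Set α) (hF : F.Finite) : {n | F ⊆ V n}.Infinite := by
  by_contra hfin
  rw [Set.not_infinite] at hfin
  have hx : ∀ n, ∃ x, x ∉ V n := fun n => (Set.ne_univ_iff_exists_notMem _).mp (hne n)
  choose x hxspec using hx
  obtain ⟨s, ⟨m, rfl⟩, hsub⟩ := hΩ.2 (F ∪ x '' {n | F ⊆ V n})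
    (hF.union (hfin.image x))
  have hm : m ∈ {n | F ⊆ V n} := fun y hy => hsub (Or.inl hy)
  exact hxspec m (hsub (Or.inr ⟨m, hm, rfl⟩))

lemma exists_bound_of_finite {α : Type*} (U : ℕ → Set α) (hU : Monotone U)
    {F : Set (Set α)} (hF : F.Finite) (hsub : F ⊆ Set.range U) :
    ∃ g, ⋃₀ F ⊆ U g := by
  refine Set.Finite.induction_on (motive := fun F _ => F ⊆ Set.range U → ∃ g, ⋃₀ F ⊆ U g)
    F hF (fun _ => ⟨0, by simp⟩) ?_ hsub
  intro a s _ _ ih hsub'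
  obtain ⟨g, hg⟩ := ih (fun t ht => hsub' (Set.mem_insert_of_mem _ ht))
  obtain ⟨m, rfl⟩ := hsub' (Set.mem_insert _ _)
  refine ⟨max m g, ?_⟩
  rw [Set.sUnion_insert]
  exact Set.union_subset (hU (le_max_left _ _)) (hg.trans (hU (le_max_right _ _)))



/-- A zero-dimensional set of reals satisfies `Ufin(O,Ω)` iff for every
continuous image `Ψ[X]` in the Baire space, `maxfin(Ψ[X])` is not
dominating. -/
theorem ufinOOmega_iff_maxfin_not_dominating (X : Set ℝ)
    (hX : ZeroDimensionalSet X) :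
    UfinOOmega ↥X ↔
      ∀ Ψ : ↥X → (ℕ → ℕ), Continuous Ψ → ¬ Dominating (maxfin (Set.range Ψ)) := by
  constructor
  · -- forward direction
    intro hU Ψ hΨ hD
    by_cases hXe : Nonempty ↥X
    case neg =>
      obtain ⟨f, ⟨G, hGne, hGsub, _⟩, _⟩ := hD (fun _ => 0)
      obtain ⟨φ, hφ⟩ := hGne
      obtain ⟨x, -⟩ := hGsub hφ
      exact hXe ⟨x⟩
    -- the set of coordinates where Ψ[X] is unbounded is infinite
    have hSinf : {n | ∀ m, ∃ x : ↥X, m < Ψ x n}.Infinite := by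
      by_contra hfin
      rw [Set.not_infinite] at hfin
      obtain ⟨N, hN⟩ := hfin.bddAbove
      have hb : ∀ n, ∃ m, N < n → ∀ x : ↥X, Ψ x n ≤ m := by
        intro n
        by_cases hn : N < n
        · have hnS : ¬ (∀ m, ∃ x : ↥X, m < Ψ x n) := fun hS => absurd (hN hS) (not_le.mpr hn)
          push_neg at hnS
          obtain ⟨m, hm⟩ := hnS
          exact ⟨m, fun _ x => hm x⟩
        · exact ⟨0, fun h => absurd h hn⟩
      choose b hbspec using hb
      obtain ⟨f, ⟨G, hGne, hGsub, rfl⟩, hev⟩ := hD (fun n => b n + 1)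
      rw [EvLE, eventually_atTop] at hev
      obtain ⟨M, hM⟩ := hev
      have h1 : b (max (N+1) M) + 1 ≤ G.sup (fun f => f (max (N+1) M)) :=
        hM _ (le_max_right _ _)
      have h2 : G.sup (fun f => f (max (N+1) M)) ≤ b (max (N+1) M) := by
        refine Finset.sup_le fun φ hφ => ?_
        obtain ⟨x, rfl⟩ := hGsub hφ
        exact hbspec _ (Nat.lt_of_lt_of_le (Nat.lt_succ_self N) (le_max_left _ _)) x
      exact Nat.not_succ_le_self _ (h1.trans h2)
    set e : ℕ → ℕ := Nat.nth (fun n => ∀ m, ∃ x : ↥X, m < Ψ x n) with he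
    have he_mem : ∀ n m, ∃ x : ↥X, m < Ψ x (e n) := Nat.nth_mem_of_infinite hSinf
    have he_mono : StrictMono e := Nat.nth_strictMono hSinf
    set U : ℕ → ℕ → Set ↥X := fun n m => {x | Ψ x (e n) ≤ m} with hUdef
    have hUmono : ∀ n, Monotone (U n) := fun n m m' h x hx => le_trans hx h
    have hUne : ∀ n m, U n m ≠ Set.univ := by
      intro n m h
      obtain ⟨x, hx⟩ := he_mem n m
      have : x ∈ U n m := h ▸ Set.mem_univ x
      exact absurd this (not_le.mpr hx)
    obtain ⟨ℱ, hℱ, hdisj⟩ := hU (fun n => Set.range (U n)) (by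
      intro n
      refine ⟨Set.countable_range _, fun u hu => ?_, ?_⟩
      · obtain ⟨m, rfl⟩ := hu
        exact ((isOpen_discrete {j | j ≤ m}).preimage ((continuous_apply (e n)).comp hΨ))
      · apply Set.eq_univ_iff_forall.mpr
        intro x
        exact ⟨U n (Ψ x (e n)), ⟨_, rfl⟩, show Ψ x (e n) ≤ Ψ x (e n) from le_refl _⟩)
    have hg : ∀ n, ∃ g, ⋃₀ ℱ n ⊆ U n g :=
      fun n => exists_bound_of_finite (U n) (hUmono n) (hℱ n).1 (hℱ n).2
    choose g hgspec using hg
    have hVne : ∀ n, ⋃₀ ℱ n ≠ Set.univ := by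
      intro n h
      exact hUne n (g n) (Set.eq_univ_of_univ_subset (h ▸ hgspec n))
    rcases hdisj with ⟨n, hn⟩ | hΩ
    · exact hVne n hn
    · obtain ⟨f, ⟨G, hGne, hGsub, rfl⟩, hev⟩ := hD
        (fun k => ((Finset.range (k+1)).filter (fun n => e n = k)).sup g + 1)
      rw [EvLE, eventually_atTop] at hev
      obtain ⟨M, hM⟩ := hev
      have hxc : ∀ φ : ℕ → ℕ, ∃ x : ↥X, φ ∈ G → Ψ x = φ := by
        intro φ
        by_cases hφ : φ ∈ G
        · obtain ⟨x, hx⟩ := hGsub hφ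
          exact ⟨x, fun _ => hx⟩
        · exact ⟨Classical.arbitrary _, fun h => absurd h hφ⟩
      choose xc hxcspec using hxc
      have hJ : {n | (xc '' ↑G : Set ↥X) ⊆ ⋃₀ ℱ n}.Infinite :=
        omega_trick _ hΩ hVne _ (G.finite_toSet.image xc)
      obtain ⟨n, hnJ, hnM⟩ := hJ.exists_gt M
      have h1 : ((Finset.range (e n + 1)).filter (fun j => e j = e n)).sup g + 1
          ≤ G.sup (fun f => f (e n)) :=
        hM (e n) (le_trans hnM.le he_mono.le_apply)
      have h2 : g n ≤ ((Finset.range (e n + 1)).filter (fun j => e j = e n)).sup g := by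
        refine Finset.le_sup ?_
        simp only [Finset.mem_filter, Finset.mem_range]
        exact ⟨Nat.lt_succ_of_le he_mono.le_apply, trivial⟩
      have h3 : G.sup (fun f => f (e n)) ≤ g n := by
        refine Finset.sup_le fun φ hφ => ?_
        have hxP : xc φ ∈ ⋃₀ ℱ n := hnJ ⟨φ, hφ, rfl⟩
        have := hgspec n hxP
        rw [hUdef] at this
        simpa [hxcspec φ hφ] using this
      exact Nat.not_succ_le_self (g n) ((Nat.succ_le_succ h2).trans (h1.trans h3))
  · -- backward direction
    intro hyp 𝒰 h𝒰
    by_cases hne : Nonempty ↥X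
    case neg =>
      refine ⟨fun _ => ∅, fun n => ⟨Set.finite_empty, Set.empty_subset _⟩, Or.inl ⟨0, ?_⟩⟩
      rw [Set.sUnion_empty]
      exact (Set.univ_eq_empty_iff.mpr (not_nonempty_iff.mp hne)).symm
    obtain ⟨B, hB, hBclopen⟩ := hX
    have hV : ∀ n, ∃ V : ℕ → Set ↥X, (∀ m, IsClopen (V m)) ∧
        (∀ m, ∃ u ∈ 𝒰 n, V m ⊆ u) ∧ (⋃ m, V m) = Set.univ := by
      intro n
      have hSopen : ∀ s ∈ {b | b ∈ B ∧ ∃ u ∈ 𝒰 n, b ⊆ u}, IsOpen s :=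
        fun s hs => (hBclopen s hs.1).isOpen
      have hScover : ⋃₀ {b | b ∈ B ∧ ∃ u ∈ 𝒰 n, b ⊆ u} = Set.univ := by
        apply Set.eq_univ_iff_forall.mpr
        intro x
        have hx : x ∈ ⋃₀ 𝒰 n := (h𝒰 n).2.2 ▸ Set.mem_univ x
        obtain ⟨u, hu, hxu⟩ := hx
        obtain ⟨b, hbB, hxb, hbu⟩ := hB.exists_subset_of_mem_open hxu ((h𝒰 n).2.1 u hu)
        exact ⟨b, ⟨hbB, u, hu, hbu⟩, hxb⟩
      obtain ⟨T, hTc, hTsub, hTeq⟩ :=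
        TopologicalSpace.isOpen_sUnion_countable {b | b ∈ B ∧ ∃ u ∈ 𝒰 n, b ⊆ u} hSopen
      have hTne : T.Nonempty := by
        rcases Set.eq_empty_or_nonempty T with h | h
        · rw [h, Set.sUnion_empty, hScover] at hTeq
          exact absurd hTeq.symm (Set.univ_eq_empty_iff.not.mpr (not_isEmpty_of_nonempty _))
        · exact h
      obtain ⟨V, hVeq⟩ := hTc.exists_eq_range hTne
      refine ⟨V, ?_, ?_, ?_⟩
      · intro m
        exact hBclopen _ (hTsub (hVeq ▸ Set.mem_range_self m)).1
      · intro m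
        exact (hTsub (hVeq ▸ Set.mem_range_self m)).2
      · rw [← Set.sUnion_range, ← hVeq, hTeq, hScover]
    choose V hVclopen hVsub hVcover using hV
    set W : ℕ → ℕ → Set ↥X := fun n m => ⋃ k ∈ Finset.range (m+1), V n k with hWdef
    have hWclopen : ∀ n m, IsClopen (W n m) :=
      fun n m => (Finset.range (m+1)).finite_toSet.isClopen_biUnion (fun k _ => hVclopen n k)
    have hWmono : ∀ n, Monotone (W n) := by
      intro n m m' h
      intro x hx
      obtain ⟨k, hk, hxk⟩ := Set.mem_iUnion₂.mp hx
      refine Set.mem_iUnion₂.mpr ⟨k, Finset.mem_range.mpr ?_, hxk⟩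
      have := Finset.mem_range.mp hk
      omega
    have hex : ∀ (x : ↥X) n, ∃ m, x ∈ W n m := by
      intro x n
      have : x ∈ ⋃ m, V n m := (hVcover n) ▸ Set.mem_univ x
      obtain ⟨m, hm⟩ := Set.mem_iUnion.mp this
      exact ⟨m, Set.mem_biUnion (Finset.self_mem_range_succ m) hm⟩
    have hcont : Continuous (fun (x : ↥X) (n : ℕ) => Nat.find (hex x n)) := by
      apply continuous_pi
      intro n
      have hpre : ∀ m, (fun (x : ↥X) => Nat.find (hex x n)) ⁻¹' {m}
          = W n m \ ⋃ k ∈ Finset.range m, W n k := by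
        intro m
        ext x
        rw [Set.mem_preimage, Set.mem_singleton_iff, Nat.find_eq_iff (hex x n)]
        simp only [Set.mem_diff, Set.mem_iUnion, Finset.mem_range, not_exists, exists_prop]
        tauto
      apply IsLocallyConstant.continuous
      intro s
      have : (fun (x : ↥X) => Nat.find (hex x n)) ⁻¹' s
          = ⋃ m ∈ s, (fun (x : ↥X) => Nat.find (hex x n)) ⁻¹' {m} := by
        ext x; simp
      rw [this]
      refine isOpen_biUnion fun m _ => ?_
      rw [hpre m]
      exact ((hWclopen n m).diff
        ((Finset.range m).finite_toSet.isClopen_biUnion (fun k _ => hWclopen n k))).isOpen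
    have hnd := hyp _ hcont
    rw [Dominating] at hnd
    push_neg at hnd
    obtain ⟨h_, hh⟩ := hnd
    choose u hu hsubu using hVsub
    refine ⟨fun n => u n '' {k | k ≤ h_ n}, ?_, Or.inr ?_⟩
    · intro n
      constructor
      · exact (Set.finite_Iic (h_ n)).image _
      · rintro s ⟨k, -, rfl⟩
        exact hu n k
    have key : ∀ F : Set ↥X, F.Finite → ∃ n, F ⊆ ⋃₀ (u n '' {k | k ≤ h_ n}) := by
      intro F hF
      rcases F.eq_empty_or_nonempty with rfl | hFne
      · exact ⟨0, Set.empty_subset _⟩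
      obtain ⟨x0, hx0⟩ := hFne
      set G : Finset (ℕ → ℕ) := hF.toFinset.image (fun x n => Nat.find (hex x n)) with hGdef
      have hGne : G.Nonempty := ⟨_, Finset.mem_image_of_mem _ (hF.mem_toFinset.mpr hx0)⟩
      have hGmem : (fun n => G.sup (fun f => f n)) ∈
          maxfin (Set.range (fun (x : ↥X) (n : ℕ) => Nat.find (hex x n))) := by
        refine ⟨G, hGne, ?_, rfl⟩
        intro φ hφ
        obtain ⟨x, -, rfl⟩ := Finset.mem_image.mp hφ
        exact ⟨x, rfl⟩
      have hnev := hh _ hGmem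
      rw [EvLE, not_eventually] at hnev
      obtain ⟨n, hn⟩ := hnev.exists
      refine ⟨n, fun x hx => ?_⟩
      have h1 : Nat.find (hex x n) ≤ h_ n := by
        have hle := Finset.le_sup (f := fun f : ℕ → ℕ => f n)
          (Finset.mem_image_of_mem (fun (x : ↥X) (n : ℕ) => Nat.find (hex x n))
            (hF.mem_toFinset.mpr hx))
        exact le_trans hle (Nat.le_of_not_le hn)
      have h2 : x ∈ W n (h_ n) := hWmono n h1 (Nat.find_spec (hex x n))
      rw [hWdef] at h2
      obtain ⟨k, hk, hxk⟩ := Set.mem_iUnion₂.mp h2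
      refine ⟨u n k, ⟨k, ?_, rfl⟩, hsubu n k hxk⟩
      exact Nat.lt_succ_iff.mp (Finset.mem_range.mp hk)
    constructor
    · apply Set.eq_univ_iff_forall.mpr
      intro x
      obtain ⟨n, hn⟩ := key {x} (Set.finite_singleton x)
      exact ⟨_, ⟨n, rfl⟩, hn rfl⟩
    · intro F hF
      obtain ⟨n, hn⟩ := key F hF
      exact ⟨_, ⟨n, rfl⟩, hn⟩
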